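/- (EMPI step guarantee / monotonic improvement) In the finite MDP setup, let f : S → ℝ, let ε = max_{s,a} |Σ_{s'} P(s'|s,a) δ_f(s,a,s')|, and let C = 2γε/(1−γ). If a policy π' satisfies L_{π,f}(π') − C Σ_s d^π(s) D_TV(π'||π)[s] ≥ 0, then J(π') ≥ J(π). -/
import Mathlib


open Finset Matrix

noncomputable section

/-- The state-transition matrix of policy `π`: `(Pmat P π) s' s = Σ_a P(s'|s,a) π(a|s)`. -/
def Pmat {S A : Type*} [Fintype A] (P : S → A → S → ℝ) (π : S → A → ℝ) : Matrix S S ℝ :=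
  Matrix.of fun s' s => ∑ a, P s a s' * π s a

/-- The discounted future state distribution `d^π = (1-γ)(I - γ P_π)⁻¹ μ`. -/
def dpi {S A : Type*} [Fintype S] [Fintype A] [DecidableEq S]
    (γ : ℝ) (P : S → A → S → ℝ) (μ : S → ℝ) (π : S → A → ℝ) : S → ℝ :=
  (1 - γ) • ((1 - γ • Pmat P π)⁻¹).mulVec μ

/-- The expected discounted return `J(π)`. -/
def J {S A : Type*} [Fintype S] [Fintype A] [DecidableEq S]
    (γ : ℝ) (P : S → A → S → ℝ) (R : S → A → S → ℝ) (μ : S → ℝ) (π : S → A → ℝ) : ℝ :=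
  (1 / (1 - γ)) * ∑ s, dpi γ P μ π s * ∑ a, π s a * ∑ s', P s a s' * R s a s'

/-- The TD-error-like quantity `δ_f(s,a,s') = R(s,a,s') + γ f(s') - f(s)`. -/
def δf {S A : Type*} (γ : ℝ) (R : S → A → S → ℝ) (f : S → ℝ) (s : S) (a : A) (s' : S) : ℝ :=
  R s a s' + γ * f s' - f s

/-- The surrogate objective `L_{π,f}(π')`. -/
def Lsur {S A : Type*} [Fintype S] [Fintype A] [DecidableEq S]
    (γ : ℝ) (P : S → A → S → ℝ) (R : S → A → S → ℝ) (μ : S → ℝ) (f : S → ℝ)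
    (π π' : S → A → ℝ) : ℝ :=
  ∑ s, dpi γ P μ π s * ∑ a, (π' s a - π s a) * ∑ s', P s a s' * δf γ R f s a s'

/-- The per-state total variational divergence `D_TV(π'||π)[s] = (1/2) Σ_a |π'(a|s) - π(a|s)|`. -/
def DTV {S A : Type*} [Fintype A] (π' π : S → A → ℝ) (s : S) : ℝ :=
  (1 / 2) * ∑ a, |π' s a - π s a|

/-- `ε = max_{s,a} |Σ_{s'} P(s'|s,a) δ_f(s,a,s')|`. -/
def epsSA {S A : Type*} [Fintype S] [Fintype A] [Nonempty S] [Nonempty A]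
    (γ : ℝ) (P : S → A → S → ℝ) (R : S → A → S → ℝ) (f : S → ℝ) : ℝ :=
  Finset.univ.sup' Finset.univ_nonempty
    fun p : S × A => |∑ s', P p.1 p.2 s' * δf γ R f p.1 p.2 s'|

/-! ### Auxiliary lemmas -/

lemma l1_bound {S : Type*} [Fintype S] (γ : ℝ) (hγ0 : 0 ≤ γ)
    (Q : Matrix S S ℝ) (hQ0 : ∀ s' s, 0 ≤ Q s' s) (hQ1 : ∀ s, ∑ s', Q s' s = 1)
    (x y : S → ℝ) (hy : ∀ s', y s' = x s' + γ * Q.mulVec y s') :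
    (1 - γ) * ∑ s, |y s| ≤ ∑ s, |x s| := by
  have hQy : ∑ s', |Q.mulVec y s'| ≤ ∑ s, |y s| := by
    calc ∑ s', |Q.mulVec y s'| ≤ ∑ s', ∑ s, Q s' s * |y s| := by
          refine Finset.sum_le_sum fun s' _ => ?_
          refine (Finset.abs_sum_le_sum_abs _ _).trans ?_
          refine Finset.sum_le_sum fun s _ => ?_
          rw [abs_mul, abs_of_nonneg (hQ0 s' s)]
      _ = ∑ s, |y s| := by
          rw [Finset.sum_comm]
          refine Finset.sum_congr rfl fun s _ => ?_
          rw [← Finset.sum_mul, hQ1 s, one_mul]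
  have h1 : ∑ s', |y s'| ≤ ∑ s', |x s'| + γ * ∑ s, |y s| := by
    calc ∑ s', |y s'| = ∑ s', |x s' + γ * Q.mulVec y s'| :=
          Finset.sum_congr rfl fun s' _ => by rw [hy s']
      _ ≤ ∑ s', (|x s'| + γ * |Q.mulVec y s'|) := by
          refine Finset.sum_le_sum fun s' _ => ?_
          refine (abs_add_le _ _).trans ?_
          rw [abs_mul, abs_of_nonneg hγ0]
      _ = ∑ s', |x s'| + γ * ∑ s', |Q.mulVec y s'| := by
          rw [Finset.sum_add_distrib, Finset.mul_sum]
      _ ≤ ∑ s', |x s'| + γ * ∑ s, |y s| := by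
          have := mul_le_mul_of_nonneg_left hQy hγ0
          linarith
  linarith

lemma fp_nonneg {S : Type*} [Fintype S] (γ : ℝ) (hγ0 : 0 ≤ γ) (hγ1 : γ < 1)
    (Q : Matrix S S ℝ) (hQ0 : ∀ s' s, 0 ≤ Q s' s) (hQ1 : ∀ s, ∑ s', Q s' s = 1)
    (x y : S → ℝ) (hy : ∀ s', y s' = x s' + γ * Q.mulVec y s') (hx : ∀ s, 0 ≤ x s) :
    ∀ s, 0 ≤ y s := by
  set n : S → ℝ := fun s => min (y s) 0 with hn
  have hn0 : ∀ s, n s ≤ 0 := fun s => min_le_right _ _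
  have hny : ∀ s, n s ≤ y s := fun s => min_le_left _ _
  have key : ∀ s', γ * ∑ s, Q s' s * n s ≤ n s' := by
    intro s'
    refine le_min ?_ ?_
    · have h1 : ∑ s, Q s' s * n s ≤ ∑ s, Q s' s * y s :=
        Finset.sum_le_sum fun s _ => mul_le_mul_of_nonneg_left (hny s) (hQ0 s' s)
      have h2 : γ * ∑ s, Q s' s * y s ≤ y s' := by
        rw [hy s']
        have : Q.mulVec y s' = ∑ s, Q s' s * y s := rfl
        rw [this]
        linarith [hx s']
      nlinarith [mul_le_mul_of_nonneg_left h1 hγ0]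
    · have h2 : ∑ s, Q s' s * n s ≤ 0 :=
        Finset.sum_nonpos fun s _ => mul_nonpos_of_nonneg_of_nonpos (hQ0 s' s) (hn0 s)
      exact mul_nonpos_of_nonneg_of_nonpos hγ0 h2
  have hsum : γ * ∑ s, n s ≤ ∑ s', n s' := by
    calc γ * ∑ s, n s = ∑ s', γ * ∑ s, Q s' s * n s := by
          rw [← Finset.mul_sum, Finset.sum_comm]
          congr 1
          refine Finset.sum_congr rfl fun s _ => ?_
          rw [← Finset.sum_mul, hQ1 s, one_mul]
      _ ≤ ∑ s', n s' := Finset.sum_le_sum fun s' _ => key s'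
  have hs0 : ∑ s, n s ≤ 0 := Finset.sum_nonpos fun s _ => hn0 s
  have hsz : ∑ s, (-n s) = 0 := by
    rw [Finset.sum_neg_distrib]
    nlinarith
  have hall := (Finset.sum_eq_zero_iff_of_nonneg
    (fun s _ => neg_nonneg.mpr (hn0 s))).mp hsz
  intro s
  have h1 : n s = 0 := by have := hall s (Finset.mem_univ s); linarith
  have h0 : (0:ℝ) ≤ min (y s) 0 := le_of_eq h1.symm
  exact le_trans h0 (min_le_left _ _)

lemma Pmat_nonneg {S A : Type*} [Fintype A] (P : S → A → S → ℝ) (π : S → A → ℝ)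
    (hP0 : ∀ s a s', 0 ≤ P s a s') (hπ0 : ∀ s a, 0 ≤ π s a) :
    ∀ s' s, 0 ≤ Pmat P π s' s :=
  fun s' s => Finset.sum_nonneg fun a _ => mul_nonneg (hP0 s a s') (hπ0 s a)

lemma Pmat_colsum {S A : Type*} [Fintype S] [Fintype A] (P : S → A → S → ℝ) (π : S → A → ℝ)
    (hP1 : ∀ s a, ∑ s', P s a s' = 1) (hπ1 : ∀ s, ∑ a, π s a = 1) :
    ∀ s, ∑ s', Pmat P π s' s = 1 := by
  intro s
  calc ∑ s', Pmat P π s' s = ∑ a, (∑ s', P s a s') * π s a := by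
        simp only [Pmat, Matrix.of_apply]
        rw [Finset.sum_comm]
        exact Finset.sum_congr rfl fun a _ => (Finset.sum_mul _ _ _).symm
    _ = 1 := by
        rw [Finset.sum_congr rfl fun a _ => by rw [hP1 s a, one_mul]]
        exact hπ1 s

lemma dpi_fixed_point {S A : Type*} [Fintype S] [Fintype A] [DecidableEq S]
    (γ : ℝ) (hγ0 : 0 ≤ γ) (hγ1 : γ < 1)
    (P : S → A → S → ℝ) (hP0 : ∀ s a s', 0 ≤ P s a s') (hP1 : ∀ s a, ∑ s', P s a s' = 1)
    (μ : S → ℝ) (π : S → A → ℝ) (hπ0 : ∀ s a, 0 ≤ π s a) (hπ1 : ∀ s, ∑ a, π s a = 1) :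
    ∀ s', dpi γ P μ π s' = (1 - γ) * μ s' + γ * (Pmat P π).mulVec (dpi γ P μ π) s' := by
  set Q := Pmat P π with hQ
  set M : Matrix S S ℝ := 1 - γ • Q with hM
  have hQ0 := Pmat_nonneg P π hP0 hπ0
  have hQ1 := Pmat_colsum P π hP1 hπ1
  have hMv : ∀ v : S → ℝ, M.mulVec v = v - γ • Q.mulVec v := by
    intro v
    rw [hM, Matrix.sub_mulVec, Matrix.one_mulVec, Matrix.smul_mulVec]
  have hinj : Function.Injective M.mulVec := by
    intro u v huv
    have hw : ∀ s', (u - v) s' = (0:S → ℝ) s' + γ * Q.mulVec (u - v) s' := by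
      intro s'
      have h0 : M.mulVec (u - v) = 0 := by
        rw [Matrix.mulVec_sub, huv, sub_self]
      have := congrFun h0 s'
      rw [hMv (u - v)] at this
      simp only [Pi.sub_apply, Pi.smul_apply, smul_eq_mul, Pi.zero_apply] at this ⊢
      linarith
    have hb := l1_bound γ hγ0 Q hQ0 hQ1 0 (u - v) hw
    simp only [Pi.zero_apply, abs_zero, Finset.sum_const_zero] at hb
    have hz : ∀ s, |(u - v) s| = 0 := by
      intro s
      have h1 : ∑ s, |(u - v) s| ≤ 0 := by nlinarith
      have h2 : (0:ℝ) ≤ ∑ s, |(u - v) s| :=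
        Finset.sum_nonneg fun s _ => abs_nonneg _
      have h3 := (Finset.sum_eq_zero_iff_of_nonneg (fun s _ => abs_nonneg ((u-v) s))).mp
        (le_antisymm h1 h2)
      exact h3 s (Finset.mem_univ s)
    funext s
    have := abs_eq_zero.mp (hz s)
    simpa [sub_eq_zero] using this
  have hdet : IsUnit M.det := by
    have := Matrix.mulVec_injective_iff_isUnit.mp hinj
    exact (Matrix.isUnit_iff_isUnit_det M).mp this
  have hMd : M.mulVec (dpi γ P μ π) = (1 - γ) • μ := by
    rw [show dpi γ P μ π = (1 - γ) • (M⁻¹.mulVec μ) from rfl]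
    rw [Matrix.mulVec_smul, Matrix.mulVec_mulVec, Matrix.mul_nonsing_inv M hdet,
      Matrix.one_mulVec]
  intro s'
  have := congrFun hMd s'
  rw [hMv] at this
  simp only [Pi.sub_apply, Pi.smul_apply, smul_eq_mul] at this
  linarith

lemma dpi_nonneg {S A : Type*} [Fintype S] [Fintype A] [DecidableEq S]
    (γ : ℝ) (hγ0 : 0 ≤ γ) (hγ1 : γ < 1)
    (P : S → A → S → ℝ) (hP0 : ∀ s a s', 0 ≤ P s a s') (hP1 : ∀ s a, ∑ s', P s a s' = 1)
    (μ : S → ℝ) (hμ0 : ∀ s, 0 ≤ μ s)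
    (π : S → A → ℝ) (hπ0 : ∀ s a, 0 ≤ π s a) (hπ1 : ∀ s, ∑ a, π s a = 1) :
    ∀ s, 0 ≤ dpi γ P μ π s := by
  refine fp_nonneg γ hγ0 hγ1 (Pmat P π) (Pmat_nonneg P π hP0 hπ0)
    (Pmat_colsum P π hP1 hπ1) (fun s => (1 - γ) * μ s) _ ?_ ?_
  · exact dpi_fixed_point γ hγ0 hγ1 P hP0 hP1 μ π hπ0 hπ1
  · intro s
    exact mul_nonneg (by linarith) (hμ0 s)

lemma telescope {S A : Type*} [Fintype S] [Fintype A] [DecidableEq S]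
    (γ : ℝ) (hγ0 : 0 ≤ γ) (hγ1 : γ < 1)
    (P : S → A → S → ℝ) (hP0 : ∀ s a s', 0 ≤ P s a s') (hP1 : ∀ s a, ∑ s', P s a s' = 1)
    (R : S → A → S → ℝ) (μ : S → ℝ) (f : S → ℝ)
    (π : S → A → ℝ) (hπ0 : ∀ s a, 0 ≤ π s a) (hπ1 : ∀ s, ∑ a, π s a = 1) :
    ∑ s, dpi γ P μ π s * ∑ a, π s a * ∑ s', P s a s' * δf γ R f s a s'
      = (1 - γ) * J γ P R μ π - (1 - γ) * ∑ s, μ s * f s := by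
  set d := dpi γ P μ π with hd
  have hfp := dpi_fixed_point γ hγ0 hγ1 P hP0 hP1 μ π hπ0 hπ1
  have inner : ∀ s a, ∑ s', P s a s' * δf γ R f s a s'
      = (∑ s', P s a s' * R s a s') + γ * (∑ s', P s a s' * f s') - f s := by
    intro s a
    have h1 : ∑ s', P s a s' * δf γ R f s a s'
        = ∑ s', (P s a s' * R s a s' + γ * (P s a s' * f s') - P s a s' * f s) :=
      Finset.sum_congr rfl fun s' _ => by simp only [δf]; ring
    rw [h1, Finset.sum_sub_distrib, Finset.sum_add_distrib, ← Finset.mul_sum,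
      ← Finset.sum_mul, hP1 s a, one_mul]
  have step1 : ∀ s, ∑ a, π s a * ∑ s', P s a s' * δf γ R f s a s'
      = (∑ a, π s a * ∑ s', P s a s' * R s a s')
        + γ * (∑ a, π s a * ∑ s', P s a s' * f s') - f s := by
    intro s
    have h1 : ∑ a, π s a * ∑ s', P s a s' * δf γ R f s a s'
        = ∑ a, (π s a * ∑ s', P s a s' * R s a s'
            + γ * (π s a * ∑ s', P s a s' * f s') - π s a * f s) :=
      Finset.sum_congr rfl fun a _ => by rw [inner s a]; ring
    rw [h1, Finset.sum_sub_distrib, Finset.sum_add_distrib, ← Finset.mul_sum,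
      ← Finset.sum_mul, hπ1 s, one_mul]
  have mid : ∑ s, d s * ∑ a, π s a * ∑ s', P s a s' * f s'
      = ∑ s', (Pmat P π).mulVec d s' * f s' := by
    have hL : ∑ s, d s * ∑ a, π s a * ∑ s', P s a s' * f s'
        = ∑ s, ∑ a, ∑ s', d s * (π s a * (P s a s' * f s')) := by
      refine Finset.sum_congr rfl fun s _ => ?_
      rw [Finset.mul_sum]
      refine Finset.sum_congr rfl fun a _ => ?_
      rw [Finset.mul_sum, Finset.mul_sum]
    have hR : ∑ s', (Pmat P π).mulVec d s' * f s'
        = ∑ s', ∑ s, ∑ a, d s * (π s a * (P s a s' * f s')) := by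
      refine Finset.sum_congr rfl fun s' _ => ?_
      have : (Pmat P π).mulVec d s' = ∑ s, (∑ a, P s a s' * π s a) * d s := rfl
      rw [this, Finset.sum_mul]
      refine Finset.sum_congr rfl fun s _ => ?_
      rw [Finset.sum_mul, Finset.sum_mul]
      exact Finset.sum_congr rfl fun a _ => by ring
    rw [hL, hR]
    have hcomm : ∀ s : S, ∑ a, ∑ s', d s * (π s a * (P s a s' * f s'))
        = ∑ s', ∑ a, d s * (π s a * (P s a s' * f s')) := fun s => Finset.sum_comm
    rw [Finset.sum_congr rfl fun s _ => hcomm s]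
    exact Finset.sum_comm
  have hmain : ∑ s, d s * ∑ a, π s a * ∑ s', P s a s' * δf γ R f s a s'
      = (∑ s, d s * ∑ a, π s a * ∑ s', P s a s' * R s a s')
        + γ * (∑ s', (Pmat P π).mulVec d s' * f s') - ∑ s, d s * f s := by
    have h1 : ∑ s, d s * ∑ a, π s a * ∑ s', P s a s' * δf γ R f s a s'
        = ∑ s, (d s * ∑ a, π s a * ∑ s', P s a s' * R s a s'
            + γ * (d s * ∑ a, π s a * ∑ s', P s a s' * f s') - d s * f s) :=
      Finset.sum_congr rfl fun s _ => by rw [step1 s]; ring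
    rw [h1, Finset.sum_sub_distrib, Finset.sum_add_distrib, ← Finset.mul_sum, mid]
  have hfterm : γ * (∑ s', (Pmat P π).mulVec d s' * f s') - ∑ s, d s * f s
      = -((1 - γ) * ∑ s, μ s * f s) := by
    have h1 : ∀ s', γ * ((Pmat P π).mulVec d s' * f s') - d s' * f s'
        = -((1 - γ) * (μ s' * f s')) := by
      intro s'
      have h := hfp s'
      rw [← hd] at h
      linear_combination (-(f s')) * h
    calc γ * (∑ s', (Pmat P π).mulVec d s' * f s') - ∑ s, d s * f s
        = ∑ s', (γ * ((Pmat P π).mulVec d s' * f s') - d s' * f s') := by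
          rw [Finset.sum_sub_distrib]
          congr 1
          exact Finset.mul_sum _ _ _
      _ = ∑ s', -((1 - γ) * (μ s' * f s')) := Finset.sum_congr rfl fun s' _ => h1 s'
      _ = -((1 - γ) * ∑ s, μ s * f s) := by
          rw [Finset.mul_sum, ← Finset.sum_neg_distrib]
  have h1γ : (1:ℝ) - γ ≠ 0 := by linarith
  have hJ : ∑ s, d s * ∑ a, π s a * ∑ s', P s a s' * R s a s' = (1 - γ) * J γ P R μ π := by
    simp only [_root_.J]
    rw [← hd]
    field_simp
  rw [hmain]
  rw [hJ]
  linarith [hfterm]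

theorem stmt_16 {S A : Type*} [Fintype S] [Fintype A] [Nonempty S] [Nonempty A] [DecidableEq S]
    (γ : ℝ) (hγ0 : 0 ≤ γ) (hγ1 : γ < 1)
    (P : S → A → S → ℝ) (hP0 : ∀ s a s', 0 ≤ P s a s') (hP1 : ∀ s a, ∑ s', P s a s' = 1)
    (R : S → A → S → ℝ)
    (μ : S → ℝ) (hμ0 : ∀ s, 0 ≤ μ s) (hμ1 : ∑ s, μ s = 1)
    (π π' : S → A → ℝ)
    (hπ0 : ∀ s a, 0 ≤ π s a) (hπ1 : ∀ s, ∑ a, π s a = 1)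
    (hπ'0 : ∀ s a, 0 ≤ π' s a) (hπ'1 : ∀ s, ∑ a, π' s a = 1)
    (f : S → ℝ)
    (hstep : Lsur γ P R μ f π π'
        - (2 * γ * epsSA γ P R f / (1 - γ)) * ∑ s, dpi γ P μ π s * DTV π' π s ≥ 0) :
    J γ P R μ π' ≥ J γ P R μ π := by
  have hγ1' : (0:ℝ) < 1 - γ := by linarith
  set d := dpi γ P μ π with hdd
  set d' := dpi γ P μ π' with hdd'
  set ε := epsSA γ P R f with hε
  set δb : S → A → ℝ := fun s a => ∑ s', P s a s' * δf γ R f s a s' with hδb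
  set Ap : S → ℝ := fun s => ∑ a, π s a * δb s a with hAp
  set A' : S → ℝ := fun s => ∑ a, π' s a * δb s a with hA'
  -- ε bounds
  have hεb : ∀ s a, |δb s a| ≤ ε := fun s a =>
    Finset.le_sup' (fun p : S × A => |∑ s', P p.1 p.2 s' * δf γ R f p.1 p.2 s'|)
      (Finset.mem_univ (s, a))
  have hε0 : 0 ≤ ε := le_trans (abs_nonneg _) (hεb (Classical.arbitrary S) (Classical.arbitrary A))
  have hA'b : ∀ s, |A' s| ≤ ε := by
    intro s
    calc |A' s| ≤ ∑ a, |π' s a * δb s a| := Finset.abs_sum_le_sum_abs _ _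
      _ ≤ ∑ a, π' s a * ε := by
          refine Finset.sum_le_sum fun a _ => ?_
          rw [abs_mul, abs_of_nonneg (hπ'0 s a)]
          exact mul_le_mul_of_nonneg_left (hεb s a) (hπ'0 s a)
      _ = ε := by rw [← Finset.sum_mul, hπ'1 s, one_mul]
  -- telescoping
  have htel := telescope γ hγ0 hγ1 P hP0 hP1 R μ f π hπ0 hπ1
  have htel' := telescope γ hγ0 hγ1 P hP0 hP1 R μ f π' hπ'0 hπ'1
  -- Lsur = ∑ d (A' - Ap)
  have hL : Lsur γ P R μ f π π' = ∑ s, d s * (A' s - Ap s) := by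
    rw [Lsur]
    refine Finset.sum_congr rfl fun s _ => ?_
    congr 1
    rw [hA', hAp]
    simp only
    rw [← Finset.sum_sub_distrib]
    exact Finset.sum_congr rfl fun a _ => by ring
  -- distribution shift
  have hd0 : ∀ s, 0 ≤ d s := dpi_nonneg γ hγ0 hγ1 P hP0 hP1 μ hμ0 π hπ0 hπ1
  have hfp := dpi_fixed_point γ hγ0 hγ1 P hP0 hP1 μ π hπ0 hπ1
  have hfp' := dpi_fixed_point γ hγ0 hγ1 P hP0 hP1 μ π' hπ'0 hπ'1
  set z : S → ℝ := fun s => d' s - d s with hz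
  set x : S → ℝ := fun s' => γ * ((Pmat P π' - Pmat P π).mulVec d) s' with hx
  have hzfp : ∀ s', z s' = x s' + γ * (Pmat P π').mulVec z s' := by
    intro s'
    have h1 := hfp s'
    have h2 := hfp' s'
    have e1 : (Pmat P π' - Pmat P π).mulVec d s'
        = (Pmat P π').mulVec d s' - (Pmat P π).mulVec d s' := by
      rw [Matrix.sub_mulVec]; rfl
    have e2 : (Pmat P π').mulVec z s' = (Pmat P π').mulVec d' s' - (Pmat P π').mulVec d s' := by
      have : z = d' - d := by funext t; simp [hz]
      rw [this, Matrix.mulVec_sub]; rfl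
    simp only [hz, hx]
    rw [e1, e2]
    linarith
  have hzb := l1_bound γ hγ0 (Pmat P π') (Pmat_nonneg P π' hP0 hπ'0)
    (Pmat_colsum P π' hP1 hπ'1) x z hzfp
  have hxb : ∑ s', |x s'| ≤ 2 * γ * ∑ s, d s * DTV π' π s := by
    have h1 : ∀ s', |x s'| ≤ γ * ∑ s, (∑ a, P s a s' * |π' s a - π s a|) * d s := by
      intro s'
      rw [hx]
      simp only
      rw [abs_mul, abs_of_nonneg hγ0]
      refine mul_le_mul_of_nonneg_left ?_ hγ0
      have e1 : (Pmat P π' - Pmat P π).mulVec d s'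
          = ∑ s, (∑ a, P s a s' * (π' s a - π s a)) * d s := by
        have : ∀ s, (Pmat P π' - Pmat P π) s' s = ∑ a, P s a s' * (π' s a - π s a) := by
          intro s
          simp only [Matrix.sub_apply, Pmat, Matrix.of_apply, ← Finset.sum_sub_distrib]
          exact Finset.sum_congr rfl fun a _ => by ring
        simp only [Matrix.mulVec, dotProduct]
        exact Finset.sum_congr rfl fun s _ => by rw [this s]
      rw [e1]
      refine (Finset.abs_sum_le_sum_abs _ _).trans ?_
      refine Finset.sum_le_sum fun s _ => ?_
      rw [abs_mul, abs_of_nonneg (hd0 s)]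
      refine mul_le_mul_of_nonneg_right ?_ (hd0 s)
      refine (Finset.abs_sum_le_sum_abs _ _).trans ?_
      refine Finset.sum_le_sum fun a _ => ?_
      rw [abs_mul, abs_of_nonneg (hP0 s a s')]
    calc ∑ s', |x s'| ≤ ∑ s', γ * ∑ s, (∑ a, P s a s' * |π' s a - π s a|) * d s :=
          Finset.sum_le_sum fun s' _ => h1 s'
      _ = γ * ∑ s, (∑ a, |π' s a - π s a|) * d s := by
          rw [← Finset.mul_sum, Finset.sum_comm]
          congr 1
          refine Finset.sum_congr rfl fun s _ => ?_
          rw [← Finset.sum_mul]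
          congr 1
          rw [Finset.sum_comm]
          refine Finset.sum_congr rfl fun a _ => ?_
          rw [← Finset.sum_mul, hP1 s a, one_mul]
      _ = 2 * γ * ∑ s, d s * DTV π' π s := by
          rw [Finset.mul_sum, Finset.mul_sum]
          refine Finset.sum_congr rfl fun s _ => ?_
          rw [DTV]
          ring
  -- main inequality
  have hdiff : (1 - γ) * J γ P R μ π' - (1 - γ) * J γ P R μ π
      = Lsur γ P R μ f π π' + ∑ s, z s * A' s := by
    have e1 : (1 - γ) * J γ P R μ π' - (1 - γ) * J γ P R μ π
        = ∑ s, d' s * A' s - ∑ s, d s * Ap s := by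
      rw [← hdd] at htel
      rw [← hdd'] at htel'
      simp only [hA', hAp, hδb]
      linarith [htel, htel']
    rw [e1, hL]
    rw [← Finset.sum_add_distrib, ← Finset.sum_sub_distrib]
    refine Finset.sum_congr rfl fun s _ => ?_
    simp only [hz]
    ring
  have hzA : |∑ s, z s * A' s| ≤ ε * ∑ s, |z s| := by
    calc |∑ s, z s * A' s| ≤ ∑ s, |z s * A' s| := Finset.abs_sum_le_sum_abs _ _
      _ ≤ ∑ s, |z s| * ε := by
          refine Finset.sum_le_sum fun s _ => ?_
          rw [abs_mul]
          exact mul_le_mul_of_nonneg_left (hA'b s) (abs_nonneg _)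
      _ = ε * ∑ s, |z s| := by rw [← Finset.sum_mul]; ring
  have hεz : ε * ∑ s, |z s| ≤ 2 * γ * ε / (1 - γ) * ∑ s, d s * DTV π' π s := by
    have h1 : (1 - γ) * ∑ s, |z s| ≤ 2 * γ * ∑ s, d s * DTV π' π s := le_trans hzb hxb
    rw [div_mul_eq_mul_div, le_div_iff₀ hγ1']
    nlinarith
  have hfinal : (1 - γ) * J γ P R μ π' - (1 - γ) * J γ P R μ π ≥ 0 := by
    rw [hdiff]
    have h1 : ∑ s, z s * A' s ≥ -(ε * ∑ s, |z s|) := by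
      linarith [neg_abs_le (∑ s, z s * A' s), hzA]
    linarith [hεz, hstep]
  nlinarith [hfinal]
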